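/- arXiv:math/0505009 — 3 statements merged into one kernel-verified Lean document; each statement's English description precedes it below -/
import Mathlib

section
/- The map Φ₊ : Sad₊ → D̄^a × S^{b−1} × ℝ defined by Φ₊(x,y) = (‖y‖·x, y/‖y‖, f₊(x,y)) is a homeomorphism from Sad₊ onto D̄^a × S^{b−1} × ℝ. -/
noncomputable def ccAux (τ : ℝ → ℝ) (s : ℝ) : ℝ := s ^ 2 * τ s + (1 - τ s)

lemma ccAux_pos {τ : ℝ → ℝ}
    (hτ01 : ∀ t ∈ Set.Icc (0 : ℝ) 1, τ t ∈ Set.Icc (0 : ℝ) 1) (hτ0 : τ 0 = 0)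
    {s : ℝ} (hs0 : 0 ≤ s) (hs1 : s ≤ 1) : 0 < ccAux τ s := by
  rcases eq_or_lt_of_le hs0 with h | h
  · simp [ccAux, ← h, hτ0]
  · have ht := hτ01 s ⟨hs0, hs1⟩
    have h1 : (1 - τ s) * (1 - s ^ 2) ≥ 0 :=
      mul_nonneg (by linarith [ht.2]) (by nlinarith)
    have h2 : ccAux τ s = s ^ 2 + (1 - τ s) * (1 - s ^ 2) := by unfold ccAux; ring
    nlinarith [pow_pos h 2]

lemma ccAux_cont {τ : ℝ → ℝ} (hτc : Continuous τ) : Continuous (ccAux τ) := by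
  unfold ccAux; fun_prop

noncomputable def rrAux (g c s : ℝ) : ℝ :=
  Real.sqrt ((g - s + Real.sqrt ((g - s) ^ 2 + 4 * c)) / 2)

lemma rrAux_inner_pos {g c s : ℝ} (hc : 0 < c) :
    0 < (g - s + Real.sqrt ((g - s) ^ 2 + 4 * c)) / 2 := by
  have h1 : |g - s| < Real.sqrt ((g - s) ^ 2 + 4 * c) := by
    rw [← Real.sqrt_sq_eq_abs]
    exact Real.sqrt_lt_sqrt (sq_nonneg _) (by linarith)
  have h2 := neg_abs_le (g - s)
  linarith

lemma rrAux_pos {g c s : ℝ} (hc : 0 < c) : 0 < rrAux g c s :=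
  Real.sqrt_pos.2 (rrAux_inner_pos hc)

lemma rrAux_sq {g c s : ℝ} (hc : 0 < c) :
    (rrAux g c s) ^ 2 = (g - s + Real.sqrt ((g - s) ^ 2 + 4 * c)) / 2 :=
  Real.sq_sqrt (rrAux_inner_pos hc).le

lemma rrAux_root {g c s : ℝ} (hc : 0 < c) :
    (rrAux g c s) ^ 2 * (rrAux g c s) ^ 2 - (g - s) * (rrAux g c s) ^ 2 - c = 0 := by
  have hD : (Real.sqrt ((g - s) ^ 2 + 4 * c)) ^ 2 = (g - s) ^ 2 + 4 * c :=
    Real.sq_sqrt (by positivity)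
  rw [rrAux_sq hc]; nlinarith [hD]

lemma rrAux_eq {g c s : ℝ} (hc : 0 < c) :
    g + c / (rrAux g c s) ^ 2 - (rrAux g c s) ^ 2 = s := by
  have hRpos : 0 < (rrAux g c s) ^ 2 := pow_pos (rrAux_pos hc) 2
  have key := rrAux_root (g := g) (s := s) hc
  have hdiv : c / (rrAux g c s) ^ 2 = (rrAux g c s) ^ 2 - (g - s) := by
    rw [div_eq_iff hRpos.ne']; linarith [key]
  linarith [hdiv]

lemma rrAux_unique {g c s r : ℝ} (hc : 0 < c) (hr : 0 < r)
    (h : g + c / r ^ 2 - r ^ 2 = s) : r = rrAux g c s := by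
  have hRroot := rrAux_root (g := g) (s := s) hc
  have hRpos := rrAux_pos (g := g) (s := s) hc
  have hr2 : (0:ℝ) < r ^ 2 := pow_pos hr 2
  have h1 : r ^ 2 * r ^ 2 - (g - s) * r ^ 2 - c = 0 := by
    field_simp at h; nlinarith [h]
  have key : (r ^ 2 - (rrAux g c s) ^ 2) * (r ^ 2 + (rrAux g c s) ^ 2 - (g - s)) = 0 := by
    linear_combination h1 - hRroot
  have hfac : 0 < r ^ 2 + (rrAux g c s) ^ 2 - (g - s) := by
    have hsq : (g - s) ≤ |g - s| := le_abs_self _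
    have hDs : |g - s| ≤ Real.sqrt ((g - s) ^ 2 + 4 * c) := by
      rw [← Real.sqrt_sq_eq_abs]
      exact Real.sqrt_le_sqrt (by linarith)
    have := rrAux_sq (g := g) (s := s) hc
    nlinarith
  have hsq_eq : r ^ 2 = (rrAux g c s) ^ 2 := by
    rcases mul_eq_zero.1 key with h' | h'
    · linarith
    · linarith
  nlinarith [hsq_eq]

set_option maxHeartbeats 4000000 in
/-- The map `Φ₊(x,y) = (‖y‖·x, y/‖y‖, f₊(x,y))` is a homeomorphism from the saddle region
`Sad₊ = {(x,y) : y ≠ 0, ‖x‖‖y‖ ≤ 1}` onto `D̄^a × S^{b-1} × ℝ`, where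
`f₊(x,y) = g + c(x,y)/‖y‖² - ‖y‖²` and
`c(x,y) = ‖x‖²‖y‖²·τ(‖x‖‖y‖) + (1 - τ(‖x‖‖y‖))`. -/
theorem saddle_plus_homeomorph (a b : ℕ) (ha : 1 ≤ a) (hb : 1 ≤ b) (g : ℝ)
    (τ : ℝ → ℝ) (hτc : Continuous τ)
    (hτ01 : ∀ t ∈ Set.Icc (0 : ℝ) 1, τ t ∈ Set.Icc (0 : ℝ) 1) (hτ0 : τ 0 = 0) :
    ∃ h : {p : EuclideanSpace ℝ (Fin a) × EuclideanSpace ℝ (Fin b) //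
          p.2 ≠ 0 ∧ ‖p.1‖ * ‖p.2‖ ≤ 1} ≃ₜ
        {x : EuclideanSpace ℝ (Fin a) // ‖x‖ ≤ 1} ×
          {y : EuclideanSpace ℝ (Fin b) // ‖y‖ = 1} × ℝ,
      ∀ p : {p : EuclideanSpace ℝ (Fin a) × EuclideanSpace ℝ (Fin b) //
          p.2 ≠ 0 ∧ ‖p.1‖ * ‖p.2‖ ≤ 1},
        ((h p).1 : EuclideanSpace ℝ (Fin a)) = ‖p.1.2‖ • p.1.1 ∧
        ((h p).2.1 : EuclideanSpace ℝ (Fin b)) = ‖p.1.2‖⁻¹ • p.1.2 ∧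
        (h p).2.2 = g +
          (‖p.1.1‖ ^ 2 * ‖p.1.2‖ ^ 2 * τ (‖p.1.1‖ * ‖p.1.2‖) +
            (1 - τ (‖p.1.1‖ * ‖p.1.2‖))) / ‖p.1.2‖ ^ 2 - ‖p.1.2‖ ^ 2 := by
  classical
  refine ⟨⟨⟨fun p =>
      (⟨‖p.1.2‖ • p.1.1, by
          have := p.2.2
          rw [norm_smul, Real.norm_of_nonneg (norm_nonneg _)]
          linarith [p.2.2, mul_comm ‖p.1.1‖ ‖p.1.2‖]⟩,
       ⟨‖p.1.2‖⁻¹ • p.1.2, by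
          rw [norm_smul, Real.norm_of_nonneg (inv_nonneg.2 (norm_nonneg _))]
          exact inv_mul_cancel₀ (norm_ne_zero_iff.2 p.2.1)⟩,
       g + ccAux τ (‖p.1.1‖ * ‖p.1.2‖) / ‖p.1.2‖ ^ 2 - ‖p.1.2‖ ^ 2),
    fun q =>
      ⟨((rrAux g (ccAux τ ‖(q.1 : EuclideanSpace ℝ (Fin a))‖) q.2.2)⁻¹ • (q.1 : EuclideanSpace ℝ (Fin a)),
        (rrAux g (ccAux τ ‖(q.1 : EuclideanSpace ℝ (Fin a))‖) q.2.2) • (q.2.1 : EuclideanSpace ℝ (Fin b))),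
       by
        have hc : 0 < ccAux τ ‖(q.1 : EuclideanSpace ℝ (Fin a))‖ :=
          ccAux_pos hτ01 hτ0 (norm_nonneg _) q.1.2
        have hr := rrAux_pos (g := g) (s := q.2.2) hc
        constructor
        · refine smul_ne_zero hr.ne' ?_
          intro h0
          have h1 := q.2.1.2
          rw [h0, norm_zero] at h1
          exact zero_ne_one h1
        · rw [norm_smul, norm_smul, Real.norm_of_nonneg (inv_nonneg.2 hr.le),
            Real.norm_of_nonneg hr.le, q.2.1.2]
          have hru : (rrAux g (ccAux τ ‖(q.1 : EuclideanSpace ℝ (Fin a))‖) q.2.2)⁻¹ *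
              ‖(q.1 : EuclideanSpace ℝ (Fin a))‖ *
              (rrAux g (ccAux τ ‖(q.1 : EuclideanSpace ℝ (Fin a))‖) q.2.2 * 1) =
              ‖(q.1 : EuclideanSpace ℝ (Fin a))‖ := by
            field_simp
          rw [hru]; exact q.1.2⟩,
    ?_, ?_⟩, ?_, ?_⟩, ?_⟩
  · -- left inverse
    rintro ⟨⟨x, y⟩, hy, hxy⟩
    have hy0 : (0:ℝ) < ‖y‖ := norm_pos_iff.2 hy
    have hcpos : 0 < ccAux τ (‖x‖ * ‖y‖) :=
      ccAux_pos hτ01 hτ0 (by positivity) hxy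
    have hnorm : ‖‖y‖ • x‖ = ‖x‖ * ‖y‖ := by
      rw [norm_smul, Real.norm_of_nonneg (norm_nonneg y), mul_comm]
    have hre : ‖y‖ = rrAux g (ccAux τ (‖x‖ * ‖y‖))
        (g + ccAux τ (‖x‖ * ‖y‖) / ‖y‖ ^ 2 - ‖y‖ ^ 2) :=
      rrAux_unique hcpos hy0 rfl
    apply Subtype.ext
    simp only [hnorm]
    rw [← hre]
    simp [smul_smul, inv_mul_cancel₀ hy0.ne', mul_inv_cancel₀ hy0.ne']
  · -- right inverse
    rintro ⟨⟨u, hu⟩, ⟨v, hv⟩, s⟩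
    have hc : 0 < ccAux τ ‖u‖ := ccAux_pos hτ01 hτ0 (norm_nonneg _) hu
    have hr := rrAux_pos (g := g) (s := s) hc
    have h1 : ‖rrAux g (ccAux τ ‖u‖) s • v‖ = rrAux g (ccAux τ ‖u‖) s := by
      rw [norm_smul, Real.norm_of_nonneg hr.le, hv, mul_one]
    have h2 : ‖(rrAux g (ccAux τ ‖u‖) s)⁻¹ • u‖ * ‖rrAux g (ccAux τ ‖u‖) s • v‖ = ‖u‖ := by
      rw [norm_smul, Real.norm_of_nonneg (inv_nonneg.2 hr.le), h1]
      field_simp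
    refine Prod.ext (Subtype.ext ?_) (Prod.ext (Subtype.ext ?_) ?_)
    · simp only [h1, smul_smul, mul_inv_cancel₀ hr.ne', one_smul]
    · simp only [h1, smul_smul, inv_mul_cancel₀ hr.ne', one_smul]
    · show g + ccAux τ (_ * _) / _ ^ 2 - _ ^ 2 = s
      rw [h2, h1]
      exact rrAux_eq hc
  · -- continuity of toFun
    have hx : Continuous fun p : {p : EuclideanSpace ℝ (Fin a) × EuclideanSpace ℝ (Fin b) //
        p.2 ≠ 0 ∧ ‖p.1‖ * ‖p.2‖ ≤ 1} => p.1.1 := continuous_subtype_val.fst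
    have hyc : Continuous fun p : {p : EuclideanSpace ℝ (Fin a) × EuclideanSpace ℝ (Fin b) //
        p.2 ≠ 0 ∧ ‖p.1‖ * ‖p.2‖ ≤ 1} => p.1.2 := continuous_subtype_val.snd
    have hny := hyc.norm
    have hnyne : ∀ p : {p : EuclideanSpace ℝ (Fin a) × EuclideanSpace ℝ (Fin b) //
        p.2 ≠ 0 ∧ ‖p.1‖ * ‖p.2‖ ≤ 1}, ‖p.1.2‖ ≠ 0 := fun p => norm_ne_zero_iff.2 p.2.1
    refine Continuous.prodMk ?_ (Continuous.prodMk ?_ ?_)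
    · exact (hny.smul hx).subtype_mk _
    · exact ((hny.inv₀ hnyne).smul hyc).subtype_mk _
    · refine (continuous_const.add (Continuous.div ?_ (hny.pow 2) ?_)).sub (hny.pow 2)
      · exact (ccAux_cont hτc).comp (hx.norm.mul hny)
      · intro p; exact pow_ne_zero 2 (hnyne p)
  · -- continuity of invFun
    have hu : Continuous fun q : {x : EuclideanSpace ℝ (Fin a) // ‖x‖ ≤ 1} ×
        {y : EuclideanSpace ℝ (Fin b) // ‖y‖ = 1} × ℝ => (q.1 : EuclideanSpace ℝ (Fin a)) :=
      continuous_subtype_val.comp continuous_fst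
    have hv : Continuous fun q : {x : EuclideanSpace ℝ (Fin a) // ‖x‖ ≤ 1} ×
        {y : EuclideanSpace ℝ (Fin b) // ‖y‖ = 1} × ℝ => (q.2.1 : EuclideanSpace ℝ (Fin b)) :=
      continuous_subtype_val.comp (continuous_fst.comp continuous_snd)
    have hs : Continuous fun q : {x : EuclideanSpace ℝ (Fin a) // ‖x‖ ≤ 1} ×
        {y : EuclideanSpace ℝ (Fin b) // ‖y‖ = 1} × ℝ => q.2.2 :=
      continuous_snd.snd
    have hr : Continuous fun q : {x : EuclideanSpace ℝ (Fin a) // ‖x‖ ≤ 1} ×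
        {y : EuclideanSpace ℝ (Fin b) // ‖y‖ = 1} × ℝ =>
        rrAux g (ccAux τ ‖(q.1 : EuclideanSpace ℝ (Fin a))‖) q.2.2 := by
      unfold rrAux
      have := (ccAux_cont hτc).comp hu.norm
      fun_prop
    have hrne : ∀ q : {x : EuclideanSpace ℝ (Fin a) // ‖x‖ ≤ 1} ×
        {y : EuclideanSpace ℝ (Fin b) // ‖y‖ = 1} × ℝ,
        rrAux g (ccAux τ ‖(q.1 : EuclideanSpace ℝ (Fin a))‖) q.2.2 ≠ 0 := fun q =>
      (rrAux_pos (ccAux_pos hτ01 hτ0 (norm_nonneg _) q.1.2)).ne'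
    exact (((hr.inv₀ hrne).smul hu).prodMk (hr.smul hv)).subtype_mk _
  · -- the formula
    intro p
    refine ⟨rfl, rfl, ?_⟩
    show g + ccAux τ (‖p.1.1‖ * ‖p.1.2‖) / ‖p.1.2‖ ^ 2 - ‖p.1.2‖ ^ 2 = _
    simp only [ccAux, mul_pow]
end

section
/- The map Φ₋ : Sad₋ → S^{a−1} × D̄^b × ℝ defined by Φ₋(x,y) = (x/‖x‖, ‖x‖·y, f₋(x,y)) is a homeomorphism from Sad₋ onto S^{a−1} × D̄^b × ℝ. -/

noncomputable def cAux (τ : ℝ → ℝ) (s : ℝ) : ℝ := s ^ 2 * τ s + (1 - τ s)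

noncomputable def RAux (g c z : ℝ) : ℝ :=
  ((z - g) + Real.sqrt ((z - g) ^ 2 + 4 * c)) / 2

lemma cAux_pos {τ : ℝ → ℝ} (hτ01 : ∀ t ∈ Set.Icc (0:ℝ) 1, τ t ∈ Set.Icc (0:ℝ) 1)
    (hτ0 : τ 0 = 0) {s : ℝ} (hs0 : 0 ≤ s) (hs1 : s ≤ 1) : 0 < cAux τ s := by
  rcases eq_or_lt_of_le hs0 with h | h
  · simp [cAux, ← h, hτ0]
  · obtain ⟨h1, h2⟩ := hτ01 s ⟨hs0, hs1⟩
    unfold cAux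
    have hs2 : (0:ℝ) ≤ 1 - s ^ 2 := by nlinarith
    nlinarith [mul_le_of_le_one_left hs2 h2, mul_pos h h]

lemma RAux_pos {g c z : ℝ} (hc : 0 < c) : 0 < RAux g c z := by
  have h1 : |z - g| < Real.sqrt ((z - g) ^ 2 + 4 * c) := by
    rw [← Real.sqrt_sq_eq_abs]
    exact Real.sqrt_lt_sqrt (sq_nonneg _) (by linarith)
  have h2 := neg_abs_le (z - g)
  unfold RAux
  linarith

lemma RAux_sq {g c z : ℝ} (hc : 0 < c) :
    RAux g c z ^ 2 = (z - g) * RAux g c z + c := by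
  have hs : Real.sqrt ((z - g) ^ 2 + 4 * c) ^ 2 = (z - g) ^ 2 + 4 * c :=
    Real.sq_sqrt (by positivity)
  unfold RAux
  nlinarith [hs]

lemma RAux_solve {g c z : ℝ} (hc : 0 < c) :
    RAux g c z - c / RAux g c z = z - g := by
  have hR := RAux_pos (g := g) (z := z) hc
  have h2 := RAux_sq (g := g) (z := z) hc
  field_simp
  nlinarith

lemma RAux_forward {g c : ℝ} (hc : 0 < c) {r : ℝ} (hr : 0 < r) :
    RAux g c (g + r ^ 2 - c / r ^ 2) = r ^ 2 := by
  have hD : (g + r ^ 2 - c / r ^ 2 - g) ^ 2 + 4 * c = (r ^ 2 + c / r ^ 2) ^ 2 := by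
    field_simp
    ring
  unfold RAux
  rw [hD, Real.sqrt_sq (by positivity)]
  field_simp
  ring

/-- The map `Φ₋(x,y) = (x/‖x‖, ‖x‖·y, f₋(x,y))` is a homeomorphism from the saddle region
`Sad₋ = {(x,y) : x ≠ 0, ‖x‖‖y‖ ≤ 1}` onto `S^{a-1} × D̄^b × ℝ`, where
`f₋(x,y) = g + ‖x‖² - c(x,y)/‖x‖²` and
`c(x,y) = ‖x‖²‖y‖²·τ(‖x‖‖y‖) + (1 - τ(‖x‖‖y‖))`. -/
theorem saddle_minus_homeomorph (a b : ℕ) (ha : 1 ≤ a) (hb : 1 ≤ b) (g : ℝ)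
    (τ : ℝ → ℝ) (hτc : Continuous τ)
    (hτ01 : ∀ t ∈ Set.Icc (0 : ℝ) 1, τ t ∈ Set.Icc (0 : ℝ) 1) (hτ0 : τ 0 = 0) :
    ∃ h : {p : EuclideanSpace ℝ (Fin a) × EuclideanSpace ℝ (Fin b) //
          p.1 ≠ 0 ∧ ‖p.1‖ * ‖p.2‖ ≤ 1} ≃ₜ
        {x : EuclideanSpace ℝ (Fin a) // ‖x‖ = 1} ×
          {y : EuclideanSpace ℝ (Fin b) // ‖y‖ ≤ 1} × ℝ,
      ∀ p : {p : EuclideanSpace ℝ (Fin a) × EuclideanSpace ℝ (Fin b) //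
          p.1 ≠ 0 ∧ ‖p.1‖ * ‖p.2‖ ≤ 1},
        ((h p).1 : EuclideanSpace ℝ (Fin a)) = ‖p.1.1‖⁻¹ • p.1.1 ∧
        ((h p).2.1 : EuclideanSpace ℝ (Fin b)) = ‖p.1.1‖ • p.1.2 ∧
        (h p).2.2 = g + ‖p.1.1‖ ^ 2 -
          (‖p.1.1‖ ^ 2 * ‖p.1.2‖ ^ 2 * τ (‖p.1.1‖ * ‖p.1.2‖) +
            (1 - τ (‖p.1.1‖ * ‖p.1.2‖))) / ‖p.1.1‖ ^ 2 := by
  classical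
  -- notation
  set E₁ := EuclideanSpace ℝ (Fin a)
  set E₂ := EuclideanSpace ℝ (Fin b)
  set D := {p : E₁ × E₂ // p.1 ≠ 0 ∧ ‖p.1‖ * ‖p.2‖ ≤ 1} with hD
  set T := ({x : E₁ // ‖x‖ = 1} × {y : E₂ // ‖y‖ ≤ 1} × ℝ) with hT
  -- the radius function for the inverse
  have hcq : ∀ q : T, 0 < cAux τ ‖(q.2.1 : E₂)‖ := fun q =>
    cAux_pos hτ01 hτ0 (norm_nonneg _) q.2.1.2
  have hRq : ∀ q : T, 0 < RAux g (cAux τ ‖(q.2.1 : E₂)‖) q.2.2 := fun q =>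
    RAux_pos (hcq q)
  have hrq : ∀ q : T, 0 < Real.sqrt (RAux g (cAux τ ‖(q.2.1 : E₂)‖) q.2.2) := fun q =>
    Real.sqrt_pos.2 (hRq q)
  -- forward map
  set F : D → T := fun p =>
    (⟨‖p.1.1‖⁻¹ • p.1.1, by
        rw [norm_smul, norm_inv, norm_norm, inv_mul_cancel₀ (norm_ne_zero_iff.2 p.2.1)]⟩,
     ⟨‖p.1.1‖ • p.1.2, by
        rw [norm_smul, Real.norm_eq_abs, abs_of_nonneg (norm_nonneg _)]; exact p.2.2⟩,
     g + ‖p.1.1‖ ^ 2 - cAux τ (‖p.1.1‖ * ‖p.1.2‖) / ‖p.1.1‖ ^ 2) with hF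
  -- inverse map
  set G : T → D := fun q =>
    ⟨(Real.sqrt (RAux g (cAux τ ‖(q.2.1 : E₂)‖) q.2.2) • (q.1 : E₁),
      (Real.sqrt (RAux g (cAux τ ‖(q.2.1 : E₂)‖) q.2.2))⁻¹ • (q.2.1 : E₂)),
     by
      constructor
      · refine smul_ne_zero (ne_of_gt (hrq q)) ?_
        intro h0
        have h1 := q.1.2
        rw [h0, norm_zero] at h1
        exact one_ne_zero h1.symm
      · rw [norm_smul, norm_smul, Real.norm_eq_abs, Real.norm_eq_abs,
          abs_of_pos (hrq q), abs_of_pos (inv_pos.2 (hrq q)), q.1.2]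
        calc Real.sqrt _ * 1 * ((Real.sqrt _)⁻¹ * ‖(q.2.1 : E₂)‖)
            = (Real.sqrt _ * (Real.sqrt _)⁻¹) * ‖(q.2.1 : E₂)‖ := by ring
          _ ≤ 1 := by rw [mul_inv_cancel₀ (ne_of_gt (hrq q)), one_mul]; exact q.2.1.2⟩
  have hGF : Function.LeftInverse G F := by
    intro p
    obtain ⟨⟨x, y⟩, hx0, hxy⟩ := p
    have hr : (0:ℝ) < ‖x‖ := norm_pos_iff.2 hx0
    have hs0 : (0:ℝ) ≤ ‖x‖ * ‖y‖ := mul_nonneg (norm_nonneg _) (norm_nonneg _)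
    have hc : 0 < cAux τ (‖x‖ * ‖y‖) := cAux_pos hτ01 hτ0 hs0 hxy
    apply Subtype.ext
    have hnorm2 : ‖(‖x‖ • y : E₂)‖ = ‖x‖ * ‖y‖ := by
      rw [norm_smul, Real.norm_eq_abs, abs_of_pos hr]
    simp only [hF, G]
    rw [hnorm2, RAux_forward hc hr, Real.sqrt_sq hr.le]
    rw [smul_smul, smul_smul, mul_inv_cancel₀ hr.ne', inv_mul_cancel₀ hr.ne',
      one_smul, one_smul]
  have hFG : Function.RightInverse G F := by
    intro q
    obtain ⟨⟨u, hu⟩, ⟨w, hw⟩, z⟩ := q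
    have hc : 0 < cAux τ ‖w‖ := cAux_pos hτ01 hτ0 (norm_nonneg _) hw
    have hR : 0 < RAux g (cAux τ ‖w‖) z := RAux_pos hc
    set r := Real.sqrt (RAux g (cAux τ ‖w‖) z) with hrdef
    have hrpos : 0 < r := Real.sqrt_pos.2 hR
    have hr2 : r ^ 2 = RAux g (cAux τ ‖w‖) z := Real.sq_sqrt hR.le
    have hnx : ‖(r • u : E₁)‖ = r := by
      rw [norm_smul, Real.norm_eq_abs, abs_of_pos hrpos, hu, mul_one]
    have hny : ‖(r⁻¹ • w : E₂)‖ = r⁻¹ * ‖w‖ := by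
      rw [norm_smul, Real.norm_eq_abs, abs_of_pos (inv_pos.2 hrpos)]
    have hnxy : ‖(r • u : E₁)‖ * ‖(r⁻¹ • w : E₂)‖ = ‖w‖ := by
      rw [hnx, hny, ← mul_assoc, mul_inv_cancel₀ hrpos.ne', one_mul]
    simp only [hF, G]
    refine Prod.ext (Subtype.ext ?_) (Prod.ext (Subtype.ext ?_) ?_)
    · show ‖(r • u : E₁)‖⁻¹ • r • u = u
      rw [hnx, smul_smul, inv_mul_cancel₀ hrpos.ne', one_smul]
    · show ‖(r • u : E₁)‖ • r⁻¹ • w = w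
      rw [hnx, smul_smul, mul_inv_cancel₀ hrpos.ne', one_smul]
    · show g + ‖(r • u : E₁)‖ ^ 2 - cAux τ (‖(r • u : E₁)‖ * ‖(r⁻¹ • w : E₂)‖) / ‖(r • u : E₁)‖ ^ 2 = z
      rw [hnx, hny, ← mul_assoc, mul_inv_cancel₀ hrpos.ne', one_mul, hr2]
      linarith [RAux_solve (g := g) (z := z) hc]
  -- continuity of F
  have hval : Continuous fun p : D => (p : E₁ × E₂) := continuous_subtype_val
  have hx1 : Continuous fun p : D => (p : E₁ × E₂).1 := hval.fst
  have hx2 : Continuous fun p : D => (p : E₁ × E₂).2 := hval.snd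
  have hnx1 : Continuous fun p : D => ‖(p : E₁ × E₂).1‖ := hx1.norm
  have hnx1ne : ∀ p : D, ‖(p : E₁ × E₂).1‖ ≠ 0 := fun p => norm_ne_zero_iff.2 p.2.1
  have hcF : Continuous F := by
    rw [hF]
    refine Continuous.prodMk ?_ (Continuous.prodMk ?_ ?_)
    · exact Continuous.subtype_mk ((hnx1.inv₀ hnx1ne).smul hx1) _
    · exact Continuous.subtype_mk (hnx1.smul hx2) _
    · have hcc : Continuous fun p : D => cAux τ (‖(p : E₁ × E₂).1‖ * ‖(p : E₁ × E₂).2‖) := by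
        apply Continuous.add
        · exact ((hnx1.mul hx2.norm).pow 2).mul (hτc.comp (hnx1.mul hx2.norm))
        · exact continuous_const.sub (hτc.comp (hnx1.mul hx2.norm))
      have hsq : Continuous fun p : D => (‖(p : E₁ × E₂).1‖ ^ 2)⁻¹ :=
        (hnx1.pow 2).inv₀ (fun p => pow_ne_zero 2 (hnx1ne p))
      exact (continuous_const.add (hnx1.pow 2)).sub (by
        simp only [div_eq_mul_inv]; exact hcc.mul hsq)
  -- continuity of G
  have hqu : Continuous fun q : T => (q.1 : E₁) := continuous_subtype_val.comp continuous_fst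
  have hqw : Continuous fun q : T => (q.2.1 : E₂) :=
    continuous_subtype_val.comp (continuous_fst.comp continuous_snd)
  have hqz : Continuous fun q : T => q.2.2 := continuous_snd.comp continuous_snd
  have hccq : Continuous fun q : T => cAux τ ‖(q.2.1 : E₂)‖ := by
    apply Continuous.add
    · exact ((hqw.norm.pow 2)).mul (hτc.comp hqw.norm)
    · exact continuous_const.sub (hτc.comp hqw.norm)
  have hRc : Continuous fun q : T => RAux g (cAux τ ‖(q.2.1 : E₂)‖) q.2.2 := by
    unfold RAux
    apply Continuous.div_const
    exact (hqz.sub continuous_const).add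
      (Real.continuous_sqrt.comp (((hqz.sub continuous_const).pow 2).add
        (continuous_const.mul hccq)))
  have hrc : Continuous fun q : T => Real.sqrt (RAux g (cAux τ ‖(q.2.1 : E₂)‖) q.2.2) :=
    Real.continuous_sqrt.comp hRc
  have hcG : Continuous G := by
    apply Continuous.subtype_mk
    exact Continuous.prodMk (hrc.smul hqu)
      ((hrc.inv₀ fun q => (hrq q).ne').smul hqw)
  refine ⟨⟨⟨F, G, hGF, hFG⟩, hcF, hcG⟩, ?_⟩
  intro p
  refine ⟨rfl, rfl, ?_⟩
  show g + ‖p.1.1‖ ^ 2 - cAux τ (‖p.1.1‖ * ‖p.1.2‖) / ‖p.1.1‖ ^ 2 = _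
  rw [cAux]
  ring_nf
end

section
/- The map (x,y) ↦ (‖y‖·x, y/‖y‖) restricts to a homeomorphism from the zero set M₊ = {(x,y) ∈ Sad₊ : f₊(x,y) = 0} onto the product D̄^a × S^{b−1} of the closed unit ball in ℝ^a with the unit sphere in ℝ^b. -/
/-- The map `(x,y) ↦ (‖y‖·x, y/‖y‖)` restricts to a homeomorphism from the zero set
`M₊ = {(x,y) ∈ Sad₊ : f₊(x,y) = 0}` onto `D̄^a × S^{b-1}`, where
`Sad₊ = {(x,y) : y ≠ 0, ‖x‖‖y‖ ≤ 1}`, `f₊(x,y) = g + c(x,y)/‖y‖² - ‖y‖²` and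
`c(x,y) = ‖x‖²‖y‖²·τ(‖x‖‖y‖) + (1 - τ(‖x‖‖y‖))`. -/
theorem saddle_zero_set_homeomorph (a b : ℕ) (ha : 1 ≤ a) (hb : 1 ≤ b) (g : ℝ)
    (τ : ℝ → ℝ) (hτc : Continuous τ)
    (hτ01 : ∀ t ∈ Set.Icc (0 : ℝ) 1, τ t ∈ Set.Icc (0 : ℝ) 1) (hτ0 : τ 0 = 0) :
    ∃ h : {p : EuclideanSpace ℝ (Fin a) × EuclideanSpace ℝ (Fin b) //
          (p.2 ≠ 0 ∧ ‖p.1‖ * ‖p.2‖ ≤ 1) ∧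
          g + (‖p.1‖ ^ 2 * ‖p.2‖ ^ 2 * τ (‖p.1‖ * ‖p.2‖) +
            (1 - τ (‖p.1‖ * ‖p.2‖))) / ‖p.2‖ ^ 2 - ‖p.2‖ ^ 2 = 0} ≃ₜ
        {x : EuclideanSpace ℝ (Fin a) // ‖x‖ ≤ 1} ×
          {y : EuclideanSpace ℝ (Fin b) // ‖y‖ = 1},
      ∀ p : {p : EuclideanSpace ℝ (Fin a) × EuclideanSpace ℝ (Fin b) //
          (p.2 ≠ 0 ∧ ‖p.1‖ * ‖p.2‖ ≤ 1) ∧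
          g + (‖p.1‖ ^ 2 * ‖p.2‖ ^ 2 * τ (‖p.1‖ * ‖p.2‖) +
            (1 - τ (‖p.1‖ * ‖p.2‖))) / ‖p.2‖ ^ 2 - ‖p.2‖ ^ 2 = 0},
        ((h p).1 : EuclideanSpace ℝ (Fin a)) = ‖p.1.2‖ • p.1.1 ∧
        ((h p).2 : EuclideanSpace ℝ (Fin b)) = ‖p.1.2‖⁻¹ • p.1.2 := by
  classical
  set c : ℝ → ℝ := fun u => u ^ 2 * τ u + (1 - τ u) with hcdef
  set R : ℝ → ℝ := fun u => Real.sqrt ((g + Real.sqrt (g ^ 2 + 4 * c u)) / 2) with hRdef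
  have hcpos : ∀ u : ℝ, 0 ≤ u → u ≤ 1 → 0 < c u := by
    intro u h0 h1
    obtain ⟨ht0, ht1⟩ := hτ01 u ⟨h0, h1⟩
    rcases eq_or_lt_of_le h0 with h | h
    · simp only [hcdef, ← h, hτ0]; norm_num
    · have hu2 : 0 < u ^ 2 := by positivity
      simp only [hcdef]
      nlinarith [mul_nonneg (by linarith : (0:ℝ) ≤ 1 - τ u) (by nlinarith : (0:ℝ) ≤ 1 - u ^ 2)]
  have hs : ∀ u : ℝ, 0 < c u → -g < Real.sqrt (g ^ 2 + 4 * c u) := by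
    intro u hcu
    have h2 : Real.sqrt (g ^ 2) < Real.sqrt (g ^ 2 + 4 * c u) :=
      Real.sqrt_lt_sqrt (by positivity) (by linarith)
    have h3 : -g ≤ Real.sqrt (g ^ 2) := by
      rw [Real.sqrt_sq_eq_abs]
      calc -g ≤ |(-g)| := le_abs_self _
        _ = |g| := abs_neg g
    linarith
  have hRsq : ∀ u : ℝ, 0 < c u → R u ^ 2 = (g + Real.sqrt (g ^ 2 + 4 * c u)) / 2 := by
    intro u hcu
    have := hs u hcu
    simp only [hRdef]
    exact Real.sq_sqrt (by linarith)
  have hRpos : ∀ u : ℝ, 0 < c u → 0 < R u := by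
    intro u hcu
    have := hs u hcu
    exact Real.sqrt_pos.mpr (by linarith)
  have hReq : ∀ u : ℝ, 0 < c u → R u ^ 2 * R u ^ 2 - g * R u ^ 2 - c u = 0 := by
    intro u hcu
    have h1 := hRsq u hcu
    have h2 : Real.sqrt (g ^ 2 + 4 * c u) ^ 2 = g ^ 2 + 4 * c u :=
      Real.sq_sqrt (by nlinarith [sq_nonneg g])
    rw [h1]; linear_combination h2 / 4
  have huniq : ∀ u : ℝ, 0 < c u → ∀ r : ℝ, 0 < r →
      r ^ 2 * r ^ 2 - g * r ^ 2 - c u = 0 → r = R u := by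
    intro u hcu r hr hre
    have hR := hRpos u hcu
    have hRe := hReq u hcu
    have key : (r ^ 2 - R u ^ 2) * (r ^ 2 + R u ^ 2 - g) = 0 := by
      linear_combination hre - hRe
    rcases mul_eq_zero.mp key with h | h
    · have h' : (r - R u) * (r + R u) = 0 := by linear_combination h
      rcases mul_eq_zero.mp h' with h'' | h''
      · linarith
      · nlinarith
    · nlinarith [mul_pos (pow_pos hr 2) (pow_pos hR 2)]
  -- on M₊, the norm of y equals R of u
  have hnormy : ∀ (x : EuclideanSpace ℝ (Fin a)) (y : EuclideanSpace ℝ (Fin b)),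
      y ≠ 0 → ‖x‖ * ‖y‖ ≤ 1 →
      g + (‖x‖ ^ 2 * ‖y‖ ^ 2 * τ (‖x‖ * ‖y‖) + (1 - τ (‖x‖ * ‖y‖))) / ‖y‖ ^ 2 - ‖y‖ ^ 2 = 0 →
      ‖y‖ = R (‖x‖ * ‖y‖) := by
    intro x y hy hle hf
    have hy' : 0 < ‖y‖ := norm_pos_iff.mpr hy
    have hcu : 0 < c (‖x‖ * ‖y‖) := hcpos _ (by positivity) hle
    refine huniq _ hcu _ hy' ?_
    have hy2 : (‖y‖ : ℝ) ^ 2 ≠ 0 := by positivity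
    field_simp at hf
    simp only [hcdef]
    nlinarith [hf]
  refine ⟨{
      toFun := fun p =>
        (⟨‖p.1.2‖ • p.1.1, by
          have hle := p.2.1.2
          rw [norm_smul, Real.norm_eq_abs, abs_of_nonneg (norm_nonneg _)]
          linarith [hle, mul_comm ‖p.1.1‖ ‖p.1.2‖]⟩,
         ⟨‖p.1.2‖⁻¹ • p.1.2, by
          have hy : p.1.2 ≠ 0 := p.2.1.1
          have hy' : (0:ℝ) < ‖p.1.2‖ := norm_pos_iff.mpr hy
          rw [norm_smul, Real.norm_eq_abs, abs_of_pos (by positivity)]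
          exact inv_mul_cancel₀ hy'.ne'⟩)
      invFun := fun q =>
        ⟨((R ‖(q.1 : EuclideanSpace ℝ (Fin a))‖)⁻¹ • (q.1 : EuclideanSpace ℝ (Fin a)),
          R ‖(q.1 : EuclideanSpace ℝ (Fin a))‖ • (q.2 : EuclideanSpace ℝ (Fin b))), by
          obtain ⟨⟨v, hv⟩, ⟨w, hw⟩⟩ := q
          have hcu : 0 < c ‖v‖ := hcpos _ (norm_nonneg _) hv
          have hR : 0 < R ‖v‖ := hRpos _ hcu
          have hw0 : w ≠ 0 := by
            intro h; rw [h, norm_zero] at hw; norm_num at hw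
          have hx' : ‖(R ‖v‖)⁻¹ • v‖ = (R ‖v‖)⁻¹ * ‖v‖ := by
            rw [norm_smul, Real.norm_eq_abs, abs_of_pos (by positivity)]
          have hy' : ‖R ‖v‖ • w‖ = R ‖v‖ := by
            rw [norm_smul, Real.norm_eq_abs, abs_of_pos hR, hw, mul_one]
          have hu : ‖(R ‖v‖)⁻¹ • v‖ * ‖R ‖v‖ • w‖ = ‖v‖ := by
            rw [hx', hy']; field_simp
          refine ⟨⟨smul_ne_zero hR.ne' hw0, by rw [hu]; exact hv⟩, ?_⟩
          have hsq : ‖(R ‖v‖)⁻¹ • v‖ ^ 2 * ‖R ‖v‖ • w‖ ^ 2 = ‖v‖ ^ 2 := by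
            rw [← mul_pow, hu]
          rw [hu, hsq, hy']
          have hre := hReq _ hcu
          have hR2 : (R ‖v‖) ^ 2 ≠ 0 := by positivity
          field_simp
          simp only [hcdef] at hre
          nlinarith [hre]⟩
      left_inv := fun p => by
        obtain ⟨⟨x, y⟩, ⟨⟨hy, hle⟩, hf⟩⟩ := p
        have hy' : 0 < ‖y‖ := norm_pos_iff.mpr hy
        have hRy : ‖y‖ = R (‖x‖ * ‖y‖) := hnormy x y hy hle hf
        apply Subtype.ext
        have hnv : ‖‖y‖ • x‖ = ‖x‖ * ‖y‖ := by
          rw [norm_smul, Real.norm_eq_abs, abs_of_pos hy', mul_comm]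
        simp only [hnv, ← hRy, smul_smul]
        rw [inv_mul_cancel₀ hy'.ne', mul_inv_cancel₀ hy'.ne', one_smul, one_smul]
      right_inv := fun q => by
        obtain ⟨⟨v, hv⟩, ⟨w, hw⟩⟩ := q
        have hcu : 0 < c ‖v‖ := hcpos _ (norm_nonneg _) hv
        have hR : 0 < R ‖v‖ := hRpos _ hcu
        have hnw : ‖R ‖v‖ • w‖ = R ‖v‖ := by
          rw [norm_smul, Real.norm_eq_abs, abs_of_pos hR, hw, mul_one]
        refine Prod.ext (Subtype.ext ?_) (Subtype.ext ?_) <;>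
          simp only [hnw, smul_smul]
        · rw [mul_inv_cancel₀ hR.ne', one_smul]
        · rw [inv_mul_cancel₀ hR.ne', one_smul]
      continuous_toFun := by
        refine Continuous.prodMk (Continuous.subtype_mk ?_ _) (Continuous.subtype_mk ?_ _)
        · exact (continuous_norm.comp (continuous_snd.comp continuous_subtype_val)).smul
            (continuous_fst.comp continuous_subtype_val)
        · refine Continuous.smul (Continuous.inv₀ (f := fun p : {p : EuclideanSpace ℝ (Fin a) × EuclideanSpace ℝ (Fin b) //
          (p.2 ≠ 0 ∧ ‖p.1‖ * ‖p.2‖ ≤ 1) ∧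
          g + (‖p.1‖ ^ 2 * ‖p.2‖ ^ 2 * τ (‖p.1‖ * ‖p.2‖) +
            (1 - τ (‖p.1‖ * ‖p.2‖))) / ‖p.2‖ ^ 2 - ‖p.2‖ ^ 2 = 0} => ‖p.1.2‖) ?_ ?_) ?_
          · exact continuous_norm.comp (continuous_snd.comp continuous_subtype_val)
          · intro p; exact norm_ne_zero_iff.mpr p.2.1.1
          · exact continuous_snd.comp continuous_subtype_val
      continuous_invFun := by
        have hcC : Continuous c := by
          simp only [hcdef]
          exact ((continuous_pow 2).mul hτc).add (continuous_const.sub hτc)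
        have hRc : Continuous R := by
          simp only [hRdef]
          exact Real.continuous_sqrt.comp
            ((continuous_const.add (Real.continuous_sqrt.comp
              (continuous_const.add (continuous_const.mul hcC)))).div_const 2)
        refine Continuous.subtype_mk (Continuous.prodMk ?_ ?_) _
        · refine Continuous.smul (Continuous.inv₀ (f := fun q : {x : EuclideanSpace ℝ (Fin a) // ‖x‖ ≤ 1} ×
          {y : EuclideanSpace ℝ (Fin b) // ‖y‖ = 1} => R ‖(q.1 : EuclideanSpace ℝ (Fin a))‖) ?_ ?_) ?_
          · exact hRc.comp (continuous_norm.comp (continuous_subtype_val.comp continuous_fst))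
          · intro q
            exact (hRpos _ (hcpos _ (norm_nonneg _) q.1.2)).ne'
          · exact continuous_subtype_val.comp continuous_fst
        · exact (hRc.comp (continuous_norm.comp
            (continuous_subtype_val.comp continuous_fst))).smul
            (continuous_subtype_val.comp continuous_snd) },
    fun p => ⟨rfl, rfl⟩⟩
end
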